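/- Let G be a finite abelian group of order mn with a subgroup N of order n, and let D be a k-element subset of G. Then D is an (m,n,k,λ)-relative difference set relative to N if and only if: for every character χ of G non-trivial on N, |χ(D)| = √k, and for every non-principal character χ of G trivial on N, |χ(D)| = √(k - λn). -/

import Mathlib

open Finset
open scoped Pointwise Classical

/-- The formal sum `∑_{x ∈ s} x` of a finite subset of a group in the
integral group ring `ℤ[G]`. -/
noncomputable def fsum {G : Type*} [Group G] [DecidableEq G] (s : Finset G) :
    MonoidAlgebra ℤ G :=
  ∑ x ∈ s, MonoidAlgebra.single x 1

namespace RDSaux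

set_option linter.unusedSectionVars false

variable {G : Type*} [CommGroup G] [Fintype G] [DecidableEq G]

lemma lift_fsum (χ : G →* ℂ) (s : Finset G) :
    (MonoidAlgebra.lift ℤ ℂ G χ) (fsum s) = ∑ x ∈ s, χ x := by
  unfold fsum
  rw [map_sum]
  simp [MonoidAlgebra.lift_single]

lemma lift_eq_sum (χ : G →* ℂ) (a : MonoidAlgebra ℤ G) :
    (MonoidAlgebra.lift ℤ ℂ G χ) a = ∑ g : G, (a.coeff g : ℂ) * χ g := by
  rw [MonoidAlgebra.lift_apply]
  rw [Finsupp.sum_fintype]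
  · simp [zsmul_eq_mul]
  · intro g; simp

lemma abs_char (χ : G →* ℂ) (g : G) : ‖χ g‖ = 1 := by
  have h : χ g ^ Fintype.card G = 1 := by rw [← map_pow, pow_card_eq_one, map_one]
  exact Complex.norm_eq_one_of_pow_eq_one h Fintype.card_ne_zero

lemma char_inv (χ : G →* ℂ) (g : G) : χ g⁻¹ = (starRingEnd ℂ) (χ g) := by
  have h1 : χ g * χ g⁻¹ = 1 := by rw [← map_mul, mul_inv_cancel, map_one]
  have h2 : χ g⁻¹ = (χ g)⁻¹ := eq_inv_of_mul_eq_one_right h1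
  rw [h2, Complex.inv_eq_conj (abs_char χ g)]

lemma lift_fsum_inv (χ : G →* ℂ) (s : Finset G) :
    (MonoidAlgebra.lift ℤ ℂ G χ) (fsum s⁻¹) = (starRingEnd ℂ) (∑ x ∈ s, χ x) := by
  rw [lift_fsum, map_sum]
  refine Finset.sum_nbij' (fun a => a⁻¹) (fun a => a⁻¹) ?_ ?_ ?_ ?_ ?_ <;>
    simp [char_inv]

lemma char_sum_eq_zero {K : Type*} [CommGroup K] [Fintype K] (χ : K →* ℂ) (h : χ ≠ 1) :
    ∑ g : K, χ g = 0 := by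
  obtain ⟨b, hb⟩ : ∃ b, χ b ≠ 1 := by
    by_contra h'; push_neg at h'; exact h (MonoidHom.ext h')
  have h1 : ∑ g : K, χ b * χ g = ∑ g : K, χ g :=
    Fintype.sum_bijective (b * ·) (Group.mulLeft_bijective b) _ _
      (fun x => (χ.map_mul b x).symm)
  rw [← Finset.mul_sum] at h1
  have h2 : (χ b - 1) * ∑ g : K, χ g = 0 := by ring_nf; rw [h1]; ring
  rcases mul_eq_zero.1 h2 with h3 | h3
  · exact absurd (sub_eq_zero.1 h3) hb
  · exact h3

noncomputable def mhEquiv : AddChar (Additive G) ℂ ≃ (G →* ℂ) where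
  toFun ψ := { toFun := fun g => ψ (Additive.ofMul g),
               map_one' := ψ.map_zero_eq_one,
               map_mul' := fun x y => ψ.map_add_eq_mul x y }
  invFun χ := { toFun := fun a => χ a.toMul,
                map_zero_eq_one' := χ.map_one,
                map_add_eq_mul' := fun x y => χ.map_mul _ _ }
  left_inv ψ := rfl
  right_inv χ := rfl

noncomputable instance : Fintype (G →* ℂ) := Fintype.ofEquiv _ (mhEquiv (G := G))

lemma sum_chars (g : G) :
    ∑ χ : G →* ℂ, χ g = if g = 1 then (Fintype.card G : ℂ) else 0 := by
  rw [← Equiv.sum_comp (mhEquiv (G := G)) (fun χ => χ g)]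
  have := AddChar.sum_apply_eq_ite (α := Additive G) (Additive.ofMul g)
  simpa [mhEquiv] using this

lemma lift_injective (a : MonoidAlgebra ℤ G)
    (h : ∀ χ : G →* ℂ, MonoidAlgebra.lift ℤ ℂ G χ a = 0) : a = 0 := by
  ext g0
  have h2 : ∑ χ : G →* ℂ, (starRingEnd ℂ) (χ g0) * (MonoidAlgebra.lift ℤ ℂ G χ) a = 0 := by
    simp [h]
  have h3 : ∀ χ : G →* ℂ, (starRingEnd ℂ) (χ g0) * (MonoidAlgebra.lift ℤ ℂ G χ) a
      = ∑ g : G, (a.coeff g : ℂ) * χ (g0⁻¹ * g) := by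
    intro χ
    rw [lift_eq_sum, Finset.mul_sum]
    refine Finset.sum_congr rfl fun g _ => ?_
    rw [map_mul, ← char_inv]
    ring
  rw [Finset.sum_congr rfl (fun χ _ => h3 χ), Finset.sum_comm] at h2
  have h4 : ∀ g : G, ∑ χ : G →* ℂ, (a.coeff g : ℂ) * χ (g0⁻¹ * g)
      = (if g0 = g then (a.coeff g : ℂ) * (Fintype.card G : ℂ) else 0) := by
    intro g
    rw [← Finset.mul_sum, sum_chars]
    by_cases hc : g0 = g
    · subst hc; simp
    · rw [if_neg (by simpa [inv_mul_eq_one] using hc), if_neg hc, mul_zero]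
  rw [Finset.sum_congr rfl (fun g _ => h4 g), Finset.sum_ite_eq Finset.univ g0] at h2
  simp only [Finset.mem_univ, if_true, mul_eq_zero] at h2
  rcases h2 with h5 | h5
  · exact_mod_cast h5
  · exact absurd h5 (Nat.cast_ne_zero.2 Fintype.card_ne_zero)

lemma sum_filter_subgroup (χ : G →* ℂ) (N : Subgroup G) :
    ∑ g ∈ Finset.univ.filter (· ∈ N), χ g = ∑ x : N, χ (x : G) := by
  rw [Finset.sum_subtype (p := (· ∈ N)) (Finset.univ.filter (· ∈ N)) (by simp) (fun g => χ g)]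

lemma sum_filter_trivial (χ : G →* ℂ) (N : Subgroup G) (h : ∀ x ∈ N, χ x = 1) :
    ∑ g ∈ Finset.univ.filter (· ∈ N), χ g = (Fintype.card N : ℂ) := by
  rw [sum_filter_subgroup]
  have hx : ∀ x : N, χ (x : G) = 1 := fun x => h x x.2
  simp [hx]

lemma sum_filter_nontrivial (χ : G →* ℂ) (N : Subgroup G) (h : ∃ x ∈ N, χ x ≠ 1) :
    ∑ g ∈ Finset.univ.filter (· ∈ N), χ g = 0 := by
  rw [sum_filter_subgroup]
  have : χ.comp N.subtype ≠ 1 := by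
    obtain ⟨x, hx, hx1⟩ := h
    intro hc
    exact hx1 (by simpa using DFunLike.congr_fun hc (⟨x, hx⟩ : N))
  simpa using char_sum_eq_zero (χ.comp N.subtype) this

end RDSaux

open RDSaux

theorem stmt5 {G : Type*} [CommGroup G] [Fintype G] [DecidableEq G]
    (N : Subgroup G) (D : Finset G) (m n k lam : ℕ)
    (hn : Fintype.card N = n) (hmn : Fintype.card G = m * n)
    (hk : D.card = k) (hkn : lam * n ≤ k)
    (hcount : k * k = k + lam * (m * n - n)) :
    (fsum D * fsum D⁻¹ =
        (k : ℤ) • 1 +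
          (lam : ℤ) • (fsum (univ : Finset G) - fsum (univ.filter (· ∈ N)))) ↔
    ((∀ χ : G →* ℂ, (∃ x ∈ N, χ x ≠ 1) →
        ‖∑ d ∈ D, χ d‖ = Real.sqrt k) ∧
      (∀ χ : G →* ℂ, χ ≠ 1 → (∀ x ∈ N, χ x = 1) →
        ‖∑ d ∈ D, χ d‖ = Real.sqrt ((k : ℝ) - lam * n))) := by
  have hsub : n ≤ m * n := by
    have h := Fintype.card_le_of_injective ((↑) : N → G) Subtype.val_injective
    rw [hn, hmn] at h
    exact h
  have hLHS : ∀ χ : G →* ℂ,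
      (MonoidAlgebra.lift ℤ ℂ G χ) (fsum D * fsum D⁻¹)
        = (Complex.normSq (∑ d ∈ D, χ d) : ℂ) := by
    intro χ
    rw [map_mul, lift_fsum, lift_fsum_inv, Complex.mul_conj]
  have hRHS : ∀ χ : G →* ℂ,
      (MonoidAlgebra.lift ℤ ℂ G χ)
        ((k : ℤ) • 1 + (lam : ℤ) • (fsum (univ : Finset G) - fsum (univ.filter (· ∈ N))))
        = (k : ℂ) + (lam : ℂ) *
            ((∑ g : G, χ g) - ∑ g ∈ univ.filter (· ∈ N), χ g) := by
    intro χ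
    rw [map_add, map_zsmul, map_zsmul, map_one, map_sub, lift_fsum, lift_fsum]
    simp only [zsmul_eq_mul]
    push_cast
    ring
  constructor
  · intro hEq
    constructor
    · intro χ hχ
      have hne1 : χ ≠ 1 := by
        obtain ⟨x, _, hx1⟩ := hχ
        intro hc; subst hc; simp at hx1
      have e := congrArg (MonoidAlgebra.lift ℤ ℂ G χ) hEq
      rw [hLHS, hRHS, char_sum_eq_zero χ hne1, sum_filter_nontrivial χ N hχ] at e
      have e2 : Complex.normSq (∑ d ∈ D, χ d) = (k : ℝ) := by
        have e3 : (Complex.normSq (∑ d ∈ D, χ d) : ℂ) = (((k : ℝ) : ℝ) : ℂ) := by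
          rw [e]; push_cast; ring
        exact_mod_cast e3
      rw [Complex.norm_def, e2]
    · intro χ hne1 htriv
      have e := congrArg (MonoidAlgebra.lift ℤ ℂ G χ) hEq
      rw [hLHS, hRHS, char_sum_eq_zero χ hne1, sum_filter_trivial χ N htriv, hn] at e
      have e2 : Complex.normSq (∑ d ∈ D, χ d) = (k : ℝ) - lam * n := by
        have : (Complex.normSq (∑ d ∈ D, χ d) : ℂ) = (((k : ℝ) - lam * n : ℝ) : ℂ) := by
          rw [e]; push_cast; ring
        exact_mod_cast this
      rw [Complex.norm_def, e2]
  · rintro ⟨h1, h2⟩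
    rw [← sub_eq_zero]
    apply lift_injective
    intro χ
    rw [map_sub, sub_eq_zero, hLHS, hRHS]
    by_cases hN : ∃ x ∈ N, χ x ≠ 1
    · have hne1 : χ ≠ 1 := by
        obtain ⟨x, _, hx1⟩ := hN
        intro hc; subst hc; simp at hx1
      rw [char_sum_eq_zero χ hne1, sum_filter_nontrivial χ N hN]
      have e2 : Complex.normSq (∑ d ∈ D, χ d) = (k : ℝ) := by
        rw [← Complex.sq_norm, h1 χ hN, Real.sq_sqrt (by positivity)]
      rw [e2]
      push_cast
      ring
    · push_neg at hN
      by_cases hc : χ = 1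
      · subst hc
        have hS : ∑ d ∈ D, (1 : G →* ℂ) d = (k : ℂ) := by
          simp [hk]
        have hU : ∑ g : G, (1 : G →* ℂ) g = ((m * n : ℕ) : ℂ) := by
          simp [← hmn]
        rw [hS, hU, sum_filter_trivial _ N (fun x _ => rfl), hn]
        rw [Complex.normSq_natCast]
        have hc2 : ((k * k : ℕ) : ℂ) = ((k + lam * (m * n - n) : ℕ) : ℂ) := by
          exact_mod_cast congrArg (Nat.cast : ℕ → ℂ) hcount
        push_cast [Nat.cast_sub hsub] at hc2
        push_cast
        linear_combination hc2
      · rw [char_sum_eq_zero χ hc, sum_filter_trivial χ N hN, hn]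
        have hnonneg : (0 : ℝ) ≤ (k : ℝ) - lam * n := by
          have : ((lam * n : ℕ) : ℝ) ≤ (k : ℕ) := Nat.cast_le.2 hkn
          push_cast at this
          linarith
        have e2 : Complex.normSq (∑ d ∈ D, χ d) = (k : ℝ) - lam * n := by
          rw [← Complex.sq_norm, h2 χ hc hN, Real.sq_sqrt hnonneg]
        rw [e2]
        push_cast
        ring
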